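/- arXiv:2101.04100 — 2 statements merged into one kernel-verified Lean document; each statement's English description precedes it below -/
import Mathlib

section
/- Let L(z) = M_T(z/2)·M_V(z)·M_T(z/2) be the leapfrog matrix for the harmonic oscillator, let α₁ = 1/(2 − 2^{1/3}·exp(2πi/3)), α₂ = 1 − 2α₁, and let R(h) be the entrywise real part of L(α₁ h)·L(α₂ h)·L(α₁ h). Then (fun h : ℝ => R(−h)·R(h) − 1) is O(h¹⁰) as h → 0; that is, the real projection of the complex fourth-order triple-jump composition is pseudo-symmetric of order 9 for the harmonic oscillator. -/
open Matrix Asymptotics Filter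

attribute [local instance] Matrix.normedAddCommGroup Matrix.normedSpace

/-- Exact evolution matrix of the harmonic oscillator `q' = p`, `p' = -q`. -/
noncomputable def MH (z : ℂ) : Matrix (Fin 2) (Fin 2) ℂ :=
  !![Complex.cos z, Complex.sin z; -Complex.sin z, Complex.cos z]

/-- Exact evolution matrix of the kinetic part. -/
def MT (z : ℂ) : Matrix (Fin 2) (Fin 2) ℂ := !![1, z; 0, 1]

/-- Exact evolution matrix of the potential part. -/
def MV (z : ℂ) : Matrix (Fin 2) (Fin 2) ℂ := !![1, 0; -z, 1]

/-- The leapfrog/Strang splitting matrix. -/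
noncomputable def L (z : ℂ) : Matrix (Fin 2) (Fin 2) ℂ := MT (z / 2) * MV z * MT (z / 2)

/-- The complex triple-jump coefficient `α₁ = 1/(2 − 2^{1/3} e^{2πi/3})` (`k = 1`). -/
noncomputable def β₁ : ℂ :=
  (2 - ((2 : ℝ) ^ ((1 : ℝ) / 3) : ℝ) * Complex.exp (2 * Real.pi * Complex.I / 3))⁻¹

/-- The coefficient `α₂ = 1 − 2α₁`. -/
noncomputable def β₂ : ℂ := 1 - 2 * β₁

/-- The complex triple-jump palindromic composition `S_{α₁h} ∘ S_{α₂h} ∘ S_{α₁h}`. -/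
noncomputable def Tjump (h : ℝ) : Matrix (Fin 2) (Fin 2) ℂ :=
  L (β₁ * (h : ℂ)) * L (β₂ * (h : ℂ)) * L (β₁ * (h : ℂ))

/-- The real projection of the complex triple-jump composition. -/
noncomputable def Rproj (h : ℝ) : Matrix (Fin 2) (Fin 2) ℝ := (Tjump h).map Complex.re

/- ------------------ auxiliary lemmas ------------------ -/

lemma cw_cube : ((((2 : ℝ) ^ ((1 : ℝ) / 3) : ℝ) : ℂ) * Complex.exp (2 * Real.pi * Complex.I / 3)) ^ 3 = 2 := by
  rw [mul_pow]
  have h1 : (((2:ℝ) ^ ((1:ℝ)/3) : ℝ) : ℂ) ^ 3 = ((((2:ℝ) ^ ((1:ℝ)/3)) ^ (3:ℕ) : ℝ) : ℂ) := by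
    push_cast; ring
  have h2 : ((2:ℝ) ^ ((1:ℝ)/3)) ^ (3:ℕ) = 2 := by
    rw [← Real.rpow_natCast ((2:ℝ) ^ ((1:ℝ)/3)) 3, ← Real.rpow_mul (by norm_num)]
    norm_num
  have h3 : Complex.exp (2 * Real.pi * Complex.I / 3) ^ 3 = 1 := by
    rw [← Complex.exp_nat_mul]
    have : (3:ℕ) * (2 * (Real.pi:ℂ) * Complex.I / 3) = 2 * Real.pi * Complex.I := by ring
    rw [this, Complex.exp_two_pi_mul_I]
  rw [h1, h2, h3]; norm_num

lemma denom_ne : (2 - (((2 : ℝ) ^ ((1 : ℝ) / 3) : ℝ) : ℂ) * Complex.exp (2 * Real.pi * Complex.I / 3)) ≠ 0 := by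
  intro h
  have h2 : (((2 : ℝ) ^ ((1 : ℝ) / 3) : ℝ) : ℂ) * Complex.exp (2 * Real.pi * Complex.I / 3) = 2 :=
    by linear_combination -h
  have := cw_cube
  rw [h2] at this
  norm_num at this

lemma rel : 6 * β₁ ^ 3 - 12 * β₁ ^ 2 + 6 * β₁ - 1 = 0 := by
  have hu := cw_cube
  have hd := denom_ne
  rw [β₁]
  field_simp
  linear_combination hu

lemma L_eq (z : ℂ) : L z = !![1 - z^2/2, z - z^3/4; -z, 1 - z^2/2] := by
  ext i j
  fin_cases i <;> fin_cases j <;>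
    simp [L, MT, MV, Matrix.mul_apply, Fin.sum_univ_two] <;> ring

lemma L_skew (z : ℂ) : L (-z) * L z = 1 := by
  ext i j
  fin_cases i <;> fin_cases j <;>
    simp [L_eq, Matrix.mul_apply, Fin.sum_univ_two, Matrix.one_apply] <;> ring

/-- h⁵-order tail coefficients of the triple-jump. -/
noncomputable def e00 (h : ℝ) : ℂ := (h:ℂ) * (1/144 - β₁/24 + β₁^2/16)
noncomputable def e01 (h : ℝ) : ℂ := β₁/24 - β₁^2/24 + (h:ℂ)^2 * (1/192 - β₁/36 + β₁^2/24)
noncomputable def e10 (h : ℝ) : ℂ := -β₁/24 + β₁^2/12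

lemma Tjump_eq (h : ℝ) : Tjump h =
    !![((1 - h^2/2 + h^4/24 : ℝ) : ℂ) + ((h^5 : ℝ) : ℂ) * e00 h,
       ((h - h^3/6 : ℝ) : ℂ) + ((h^5 : ℝ) : ℂ) * e01 h;
       ((-h + h^3/6 : ℝ) : ℂ) + ((h^5 : ℝ) : ℂ) * e10 h,
       ((1 - h^2/2 + h^4/24 : ℝ) : ℂ) + ((h^5 : ℝ) : ℂ) * e00 h] := by
  have hr := rel
  ext i j
  fin_cases i <;> fin_cases j
  · simp [Tjump, β₂, L_eq, e00, Matrix.mul_apply, Fin.sum_univ_two]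
    push_cast
    linear_combination ((h:ℂ)^4/24 + (h:ℂ)^6 * (1/144 - β₁^2/48 + β₁^3/24)) * hr
  · simp [Tjump, β₂, L_eq, e01, Matrix.mul_apply, Fin.sum_univ_two]
    push_cast
    linear_combination ((h:ℂ)^3/12 + (h:ℂ)^5 * (β₁/24 - β₁^2/24)
      + (h:ℂ)^7 * (1/192 + β₁/288 - β₁^3/96 + β₁^4/48)) * hr
  · simp [Tjump, β₂, L_eq, e10, Matrix.mul_apply, Fin.sum_univ_two]
    push_cast
    linear_combination ((h:ℂ)^3/6 + (h:ℂ)^5 * (-β₁/24 + β₁^2/12)) * hr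
  · simp [Tjump, β₂, L_eq, e00, Matrix.mul_apply, Fin.sum_univ_two]
    push_cast
    linear_combination ((h:ℂ)^4/24 + (h:ℂ)^6 * (1/144 - β₁^2/48 + β₁^3/24)) * hr

/-- Imaginary-part matrix of the h⁵ tail. -/
noncomputable def Gm (h : ℝ) : Matrix (Fin 2) (Fin 2) ℝ :=
  !![(e00 h).im, (e01 h).im; (e10 h).im, (e00 h).im]

lemma im_eq (h : ℝ) : (Tjump h).map Complex.im = h^5 • Gm h := by
  rw [Tjump_eq]
  ext i j
  fin_cases i <;> fin_cases j <;>
    simp [Gm, Matrix.map_apply, Complex.add_im, Complex.mul_im, ← Complex.ofReal_pow,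
      Complex.ofReal_im, Complex.ofReal_re] <;> ring

lemma map_re_mul (A B : Matrix (Fin 2) (Fin 2) ℂ) :
    (A * B).map Complex.re = A.map Complex.re * B.map Complex.re
      - A.map Complex.im * B.map Complex.im := by
  ext i j
  simp [Matrix.mul_apply, Matrix.map_apply, Fin.sum_univ_two, Complex.mul_re]
  ring

lemma map_re_one : ((1 : Matrix (Fin 2) (Fin 2) ℂ)).map Complex.re = 1 := by
  ext i j
  simp [Matrix.map_apply, Matrix.one_apply, apply_ite Complex.re]

lemma Tjump_skew (h : ℝ) : Tjump (-h) * Tjump h = 1 := by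
  have hc : ((-h : ℝ) : ℂ) = -(h : ℂ) := by push_cast; ring
  rw [Tjump, Tjump, hc, mul_neg, mul_neg]
  simp only [mul_assoc]
  rw [← mul_assoc (L (-(β₁ * h))) (L (β₁ * h)) (L (β₂ * h) * L (β₁ * h)), L_skew, one_mul,
    ← mul_assoc (L (-(β₂ * h))) (L (β₂ * h)) (L (β₁ * h)), L_skew, one_mul, L_skew]

lemma Gm_cont : Continuous fun h : ℝ => Gm h := by
  apply continuous_matrix
  intro i j
  fin_cases i <;> fin_cases j <;>
    simp [Gm, e00, e01, e10] <;> fun_prop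

lemma key (h : ℝ) : Rproj (-h) * Rproj h - 1 = (-(h^10)) • (Gm (-h) * Gm h) := by
  have h1 := map_re_mul (Tjump (-h)) (Tjump h)
  rw [Tjump_skew, map_re_one, im_eq, im_eq] at h1
  have h2 : ((-h)^5 • Gm (-h)) * (h^5 • Gm h) = (-(h^10)) • (Gm (-h) * Gm h) := by
    rw [smul_mul_assoc, mul_smul_comm, smul_smul]
    congr 1
    ring
  rw [h2] at h1
  rw [eq_comm, sub_eq_iff_eq_add] at h1
  rw [show Rproj (-h) = (Tjump (-h)).map Complex.re from rfl,
    show Rproj h = (Tjump h).map Complex.re from rfl, h1]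
  abel

/-- the real projection of the complex fourth-order triple-jump
composition is pseudo-symmetric of order 9 for the harmonic oscillator. -/
theorem projected_complex_triple_jump_pseudo_symmetric_order_nine :
    (fun h : ℝ => Rproj (-h) * Rproj h - 1) =O[nhds 0] fun h : ℝ => h ^ 10 := by
  have hcont : Continuous fun h : ℝ => ‖Gm (-h) * Gm h‖ :=
    ((Gm_cont.comp continuous_neg).matrix_mul Gm_cont).norm
  have ht : Tendsto (fun h : ℝ => ‖Gm (-h) * Gm h‖) (nhds 0) (nhds ‖Gm (-0) * Gm 0‖) :=
    hcont.tendsto 0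
  rw [isBigO_iff]
  refine ⟨‖Gm (-0) * Gm 0‖ + 1, ?_⟩
  filter_upwards [ht.eventually_lt_const (lt_add_one _)] with h hh
  rw [key h, norm_smul]
  have h10 : ‖(-(h^10))‖ = ‖h ^ 10‖ := by rw [norm_neg]
  rw [h10]
  have hn : (0:ℝ) ≤ ‖h ^ 10‖ := norm_nonneg _
  calc ‖h ^ 10‖ * ‖Gm (-h) * Gm h‖ ≤ ‖h ^ 10‖ * (‖Gm (-0) * Gm 0‖ + 1) :=
        mul_le_mul_of_nonneg_left hh.le hn
    _ = (‖Gm (-0) * Gm 0‖ + 1) * ‖h ^ 10‖ := by ring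
end

section
/- Let L(z) = M_T(z/2)·M_V(z)·M_T(z/2) be the leapfrog matrix for the harmonic oscillator, let α₁ = 1/(2 − 2^{1/3}·exp(2πi/3)), α₂ = 1 − 2α₁, and let R(h) be the entrywise real part of L(α₁ h)·L(α₂ h)·L(α₁ h). Then (fun h : ℝ => det R(h) − 1) is O(h¹⁰) as h → 0; that is, the real projection of the complex fourth-order triple-jump composition is pseudo-symplectic of order 9 for the harmonic oscillator. -/
open Matrix Asymptotics Filter

attribute [local instance] Matrix.normedAddCommGroup Matrix.normedSpace

private lemma Lexp (z : ℂ) : L z = !![1 - z*z/2, z - z*z*z/4; -z, 1 - z*z/2] := by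
  ext i j
  fin_cases i <;> fin_cases j <;>
    · simp [L, MT, MV, Matrix.mul_apply, Fin.sum_univ_two]
      try ring

set_option maxHeartbeats 2000000 in
private lemma Tre (β : ℂ) (a b : ℝ) (ha : β.re = a) (hb : β.im = b) (h : ℝ) :
    (L (β * (h:ℂ)) * L ((1 - 2*β) * (h:ℂ)) * L (β * (h:ℂ))).map Complex.re =
    !![1 + (-1/2) * h^2 + (1/2) * b^2 * h^4 + (1/2) * b^4 * h^6 + (-1/4) * b^6 * h^6 + (1/4) * a * h^4 + (-3/4) * a * b^2 * h^4 + (3/8) * a * b^2 * h^6 + (-25/8) * a * b^4 * h^6 + (-1/2) * a^2 * h^4 + (-3) * a^2 * b^2 * h^6 + (15/4) * a^2 * b^4 * h^6 + (1/4) * a^3 * h^4 + (-1/8) * a^3 * h^6 + (25/4) * a^3 * b^2 * h^6 + (1/2) * a^4 * h^6 + (-15/4) * a^4 * b^2 * h^6 + (-5/8) * a^5 * h^6 + (1/4) * a^6 * h^6,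
       1 * h + (-1/4) * h^3 + 1 * b^2 * h^3 + (-1/4) * b^2 * h^5 + (3/4) * b^4 * h^5 + (-1/16) * b^4 * h^7 + (5/16) * b^6 * h^7 + (1/2) * a * h^3 + (-3/2) * a * b^2 * h^3 + (9/4) * a * b^2 * h^5 + (-5/4) * a * b^4 * h^5 + (5/4) * a * b^4 * h^7 + (-7/8) * a * b^6 * h^7 + (-1) * a^2 * h^3 + (1/4) * a^2 * h^5 + (-9/2) * a^2 * b^2 * h^5 + (3/8) * a^2 * b^2 * h^7 + (-75/16) * a^2 * b^4 * h^7 + (1/2) * a^3 * h^3 + (-3/4) * a^3 * h^5 + (5/2) * a^3 * b^2 * h^5 + (-5/2) * a^3 * b^2 * h^7 + (35/8) * a^3 * b^4 * h^7 + (3/4) * a^4 * h^5 + (-1/16) * a^4 * h^7 + (75/16) * a^4 * b^2 * h^7 + (-1/4) * a^5 * h^5 + (1/4) * a^5 * h^7 + (-21/8) * a^5 * b^2 * h^7 + (-5/16) * a^6 * h^7 + (1/8) * a^7 * h^7;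
       (-1) * h + 2 * b^2 * h^3 + (1/4) * b^2 * h^5 + (-5/4) * b^4 * h^5 + 1 * a * h^3 + (-3) * a * b^2 * h^3 + (-3) * a * b^2 * h^5 + (5/2) * a * b^4 * h^5 + (-2) * a^2 * h^3 + (-1/4) * a^2 * h^5 + (15/2) * a^2 * b^2 * h^5 + 1 * a^3 * h^3 + 1 * a^3 * h^5 + (-5) * a^3 * b^2 * h^5 + (-5/4) * a^4 * h^5 + (1/2) * a^5 * h^5,
       1 + (-1/2) * h^2 + (1/2) * b^2 * h^4 + (1/2) * b^4 * h^6 + (-1/4) * b^6 * h^6 + (1/4) * a * h^4 + (-3/4) * a * b^2 * h^4 + (3/8) * a * b^2 * h^6 + (-25/8) * a * b^4 * h^6 + (-1/2) * a^2 * h^4 + (-3) * a^2 * b^2 * h^6 + (15/4) * a^2 * b^4 * h^6 + (1/4) * a^3 * h^4 + (-1/8) * a^3 * h^6 + (25/4) * a^3 * b^2 * h^6 + (1/2) * a^4 * h^6 + (-15/4) * a^4 * b^2 * h^6 + (-5/8) * a^5 * h^6 + (1/4) * a^6 * h^6] := by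
  simp only [Lexp]
  ext i j
  fin_cases i <;> fin_cases j <;>
    · simp [Matrix.mul_apply, Fin.sum_univ_two, Complex.div_re, Complex.div_im,
        Complex.normSq_apply, ha, hb]
      ring

private noncomputable abbrev cc : ℝ := (2:ℝ) ^ ((1:ℝ)/3)
private noncomputable abbrev ss : ℝ := Real.sqrt 3

private lemma hcc : cc ^ (3:ℕ) = 2 := by
  rw [cc, ← Real.rpow_natCast ((2:ℝ) ^ ((1:ℝ)/3)) 3, ← Real.rpow_mul (by norm_num : (0:ℝ) ≤ 2)]
  norm_num

private lemma hss : ss ^ 2 = 3 := Real.sq_sqrt (by norm_num)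

private lemma hccpos : (0:ℝ) < cc := Real.rpow_pos_of_pos (by norm_num) _

private lemma hexp : Complex.exp (2 * Real.pi * Complex.I / 3)
    = Complex.ofReal (-(1/2)) + Complex.ofReal (ss/2) * Complex.I := by
  have h1 : (2 * (Real.pi:ℂ) * Complex.I / 3 : ℂ) = ((2*Real.pi/3 : ℝ):ℂ) * Complex.I := by
    push_cast; ring
  rw [h1, Complex.exp_mul_I, ← Complex.ofReal_cos, ← Complex.ofReal_sin]
  rw [show 2*Real.pi/3 = Real.pi - Real.pi/3 by ring, Real.cos_pi_sub, Real.sin_pi_sub,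
      Real.cos_pi_div_three, Real.sin_pi_div_three]

private lemma hwre : (2 - ((2:ℝ) ^ ((1:ℝ)/3) : ℝ) * Complex.exp (2 * Real.pi * Complex.I / 3)).re
    = 2 + cc/2 := by
  rw [hexp]; simp; ring

private lemma hwim : (2 - ((2:ℝ) ^ ((1:ℝ)/3) : ℝ) * Complex.exp (2 * Real.pi * Complex.I / 3)).im
    = -(cc*ss/2) := by
  rw [hexp]; simp; ring

private lemma hns : Complex.normSq (2 - ((2:ℝ) ^ ((1:ℝ)/3) : ℝ) * Complex.exp (2 * Real.pi * Complex.I / 3))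
    = 4 + 2*cc + cc^2 := by
  rw [Complex.normSq_apply, hwre, hwim]
  linear_combination (cc^2/4) * hss

private lemma hdenpos : (0:ℝ) < 4 + 2*cc + cc^2 := by nlinarith [hccpos, sq_nonneg cc]

private lemma beta_re : β₁.re = (8 - 2*cc - cc^2)/12 := by
  rw [β₁, Complex.inv_re, hns, hwre, div_eq_div_iff hdenpos.ne' (by norm_num)]
  linear_combination ((4:ℝ) + cc) * hcc

private lemma beta_im : β₁.im = (2*cc*ss - cc^2*ss)/12 := by
  rw [β₁, Complex.inv_im, hns, hwim, neg_neg, div_eq_div_iff hdenpos.ne' (by norm_num)]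
  linear_combination ((cc:ℝ)*ss) * hcc

private lemma rel1 : 48*(β₁.re)^3 - 96*(β₁.re)^2 + 60*β₁.re - 11 = 0 := by
  rw [beta_re]
  linear_combination ((-5/18) + (-1/3)*cc + (-1/6)*cc^2 + (-1/36)*cc^3 : ℝ) * hcc

private lemma rel2 : (β₁.im)^2 - 3*(β₁.re)^2 + 4*β₁.re - 1 = 0 := by
  rw [beta_re, beta_im]
  linear_combination (((-1/12) + (-1/36)*ss^2 + (-1/48)*cc + (1/144)*cc*ss^2 : ℝ)) * hcc
    + (((-1/18) + (1/72)*cc + (1/36)*cc^2 : ℝ)) * hss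

set_option maxHeartbeats 2000000 in
lemma key_s18 (a b h : ℝ) (h1 : 48*a^3 - 96*a^2 + 60*a - 11 = 0) (h2 : b^2 - 3*a^2 + 4*a - 1 = 0) :
    (1 + (-1/2) * h^2 + (1/2) * b^2 * h^4 + (1/2) * b^4 * h^6 + (-1/4) * b^6 * h^6 + (1/4) * a * h^4 + (-3/4) * a * b^2 * h^4 + (3/8) * a * b^2 * h^6 + (-25/8) * a * b^4 * h^6 + (-1/2) * a^2 * h^4 + (-3) * a^2 * b^2 * h^6 + (15/4) * a^2 * b^4 * h^6 + (1/4) * a^3 * h^4 + (-1/8) * a^3 * h^6 + (25/4) * a^3 * b^2 * h^6 + (1/2) * a^4 * h^6 + (-15/4) * a^4 * b^2 * h^6 + (-5/8) * a^5 * h^6 + (1/4) * a^6 * h^6) * (1 + (-1/2) * h^2 + (1/2) * b^2 * h^4 + (1/2) * b^4 * h^6 + (-1/4) * b^6 * h^6 + (1/4) * a * h^4 + (-3/4) * a * b^2 * h^4 + (3/8) * a * b^2 * h^6 + (-25/8) * a * b^4 * h^6 + (-1/2) * a^2 * h^4 + (-3) * a^2 * b^2 * h^6 + (15/4) * a^2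 * b^4 * h^6 + (1/4) * a^3 * h^4 + (-1/8) * a^3 * h^6 + (25/4) * a^3 * b^2 * h^6 + (1/2) * a^4 * h^6 + (-15/4) * a^4 * b^2 * h^6 + (-5/8) * a^5 * h^6 + (1/4) * a^6 * h^6) - (1 * h + (-1/4) * h^3 + 1 * b^2 * h^3 + (-1/4) * b^2 * h^5 + (3/4) * b^4 * h^5 + (-1/16) * b^4 * h^7 + (5/16) * b^6 * h^7 + (1/2) * a * h^3 + (-3/2) * a * b^2 * h^3 + (9/4) * a * b^2 * h^5 + (-5/4) * a * b^4 * h^5 + (5/4) * a * b^4 * h^7 + (-7/8) * a * b^6 * h^7 + (-1) * a^2 * h^3 + (1/4) * a^2 * h^5 + (-9/2) * a^2 * b^2 * h^5 + (3/8) * a^2 * b^2 * h^7 + (-75/16) * a^2 * b^4 * h^7 + (1/2) * a^3 * h^3 + (-3/4) * a^3 * h^5 + (5/2) * a^3 * b^2 * h^5 + (-5/2) * a^3 * b^2 * h^7 + (35/8) * a^3 * b^4 * h^7 + (3/4) * a^4 * h^5 + (-1/16) * a^4 * h^7 + (75/16) * a^4 * b^2 * h^7 + (-1/4) * a^5 *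 h^5 + (1/4) * a^5 * h^7 + (-21/8) * a^5 * b^2 * h^7 + (-5/16) * a^6 * h^7 + (1/8) * a^7 * h^7) * ((-1) * h + 2 * b^2 * h^3 + (1/4) * b^2 * h^5 + (-5/4) * b^4 * h^5 + 1 * a * h^3 + (-3) * a * b^2 * h^3 + (-3) * a * b^2 * h^5 + (5/2) * a * b^4 * h^5 + (-2) * a^2 * h^3 + (-1/4) * a^2 * h^5 + (15/2) * a^2 * b^2 * h^5 + 1 * a^3 * h^3 + 1 * a^3 * h^5 + (-5) * a^3 * b^2 * h^5 + (-5/4) * a^4 * h^5 + (1/2) * a^5 * h^5) - 1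
      = h^10 * ((13/13824) + (-1/4608) * h^2 + (-1/288) * a + (25/27648) * a * h^2 + (1/576) * a^2 + (-5/6912) * a^2 * h^2) := by
  linear_combination ((0 * h^6 + 0 * h^8 + (-313/13824) * h^10 + (-131/4608) * h^12 + (127/384) * a * h^10 + (12995/27648) * a * h^12 + (-1151/576) * a^2 * h^10 + (-2951/864) * a^2 * h^12 + (1879/288) * a^3 * h^10 + (343/24) * a^3 * h^12 + (-149/12) * a^4 * h^10 + (-21835/576) * a^4 * h^12 + (55/4) * a^5 * h^10 + (9505/144) * a^5 * h^12 + (-49/6) * a^6 * h^10 + (-226/3) * a^6 * h^12 + 2 * a^7 * h^10 + (217/4) * a^7 * h^12 + (-67/3) * a^8 * h^12 + 4 * a^9 * h^12) : ℝ) * h1 + ((0 * h^6 + 0 * h^8 + (1/4) * h^10 + (5/16) * h^12 + (1/2) * b^2 * h^6 + (-1/16) * b^2 * h^8 + (1/4) * b^2 * h^10 + (5/16) * b^2 * h^12 + (-1/2) * b^4 * h^6 + (5/16) * b^4 * h^8 + (3/16) * b^4 * h^10 + (5/16) * b^4 * h^12 + (1/16) * b^6 * h^10 + (19/64) * b^6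 * h^12 + (13/64) * b^8 * h^12 + (1/16) * b^10 * h^12 + 0 * a * h^6 + 0 * a * h^8 + (-4) * a * h^10 + (-45/8) * a * h^12 + (-2) * a * b^2 * h^6 + (1/2) * a * b^2 * h^8 + (-3) * a * b^2 * h^10 + (-35/8) * a * b^2 * h^12 + (-1/2) * a * b^4 * h^8 + (-13/8) * a * b^4 * h^10 + (-25/8) * a * b^4 * h^12 + (-3/8) * a * b^6 * h^10 + (-29/16) * a * b^6 * h^12 + (-9/16) * a * b^8 * h^12 + (109/4) * a^2 * h^10 + (721/16) * a^2 * h^12 + (3/2) * a^2 * b^2 * h^6 + (-15/16) * a^2 * b^2 * h^8 + (231/16) * a^2 * b^2 * h^10 + (213/8) * a^2 * b^2 * h^12 + (39/8) * a^2 * b^4 * h^10 + (421/32) * a^2 * b^4 * h^12 + (1/2) * a^2 * b^6 * h^10 + (283/64) * a^2 * b^6 * h^12 + (1/2) * a^2 * b^8 * h^12 + (-207/2) * a^3 * h^10 + (-423/2) * a^3 * h^12 + (1/2) * a^3 * b^2 * h^8 + (-289/8) * a^3 * b^2 * h^10 + (-735/8) * a^3 * b^2 * h^12 + (-25/4) *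 a^3 * b^4 * h^10 + (-237/8) * a^3 * b^4 * h^12 + (-79/16) * a^3 * b^6 * h^12 + 240 * a^4 * h^10 + (2575/4) * a^4 * h^12 + (797/16) * a^4 * b^2 * h^10 + (12567/64) * a^4 * b^2 * h^12 + 3 * a^4 * b^4 * h^10 + (2399/64) * a^4 * b^4 * h^12 + (17/8) * a^4 * b^6 * h^12 + (-348) * a^5 * h^10 + (-1327) * a^5 * h^12 + (-287/8) * a^5 * b^2 * h^10 + (-4253/16) * a^5 * b^2 * h^12 + (-403/16) * a^5 * b^4 * h^12 + 308 * a^6 * h^10 + 1875 * a^6 * h^12 + (21/2) * a^6 * b^2 * h^10 + (14225/64) * a^6 * b^2 * h^12 + 7 * a^6 * b^4 * h^12 + (-152) * a^7 * h^10 + (-1792) * a^7 * h^12 + (-1677/16) * a^7 * b^2 * h^12 + 32 * a^8 * h^10 + 1108 * a^8 * h^12 + (341/16) * a^8 * b^2 * h^12 + (-400) * a^9 * h^12 + 64 * a^10 * h^12) : ℝ) * h2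

private noncomputable def qf : ℝ → ℝ := fun h => (13/13824) + (-1/4608) * h^2 + (-1/288) * β₁.re + (25/27648) * β₁.re * h^2 + (1/576) * β₁.re^2 + (-5/6912) * β₁.re^2 * h^2

private lemma qf_cont : Continuous qf := by unfold qf; fun_prop

/-- the real projection of the complex fourth-order triple-jump
composition is pseudo-symplectic of order 9 for the harmonic oscillator. -/
theorem projected_complex_triple_jump_pseudo_symplectic_order_nine :
    (fun h : ℝ => (Rproj h).det - 1) =O[nhds 0] fun h : ℝ => h ^ 10 := by
  have hdet : ∀ h : ℝ, (Rproj h).det - 1 = h ^ 10 * qf h := by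
    intro h
    rw [show Rproj h = (L (β₁*(h:ℂ)) * L ((1 - 2*β₁)*(h:ℂ)) * L (β₁*(h:ℂ))).map Complex.re from rfl,
      Tre β₁ β₁.re β₁.im rfl rfl h, Matrix.det_fin_two_of]
    exact key_s18 β₁.re β₁.im h rel1 rel2
  have h1 : qf =O[nhds 0] (fun _ : ℝ => (1:ℝ)) :=
    Asymptotics.isBigO_const_of_tendsto (qf_cont.tendsto 0) one_ne_zero
  have h2 := (Asymptotics.isBigO_refl (fun h : ℝ => h ^ 10) (nhds 0)).mul h1
  simp only [hdet]
  simpa using h2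
end
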